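/- Let f: ℝⁿ → ℝ be convex and C¹ with L_f-Lipschitz gradient, g proper lsc convex, T ∈ ℝ^{m×n}, μ > 0, and let (x*, y*) be a primal-dual optimal pair. Along solutions of the gradient flow ẋ = −(∇f(x) + Tᵀ∇M_{μg}(Tx + μy)), ẏ = μ(∇M_{μg}(Tx + μy) − y), the function V(x,y) = (1/2)‖x − x*‖² + (1/2)‖y − y*‖² satisfies V̇ ≤ −(1/L_f)‖∇f(x) − ∇f(x*)‖² − (1/μ)‖T(x − x*) − z̃‖², where z̃ = prox_{μg}(Tx + μy) − prox_{μg}(Tx* + μy*). In particular V̇ ≤ 0. -/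

import Mathlib

open scoped RealInnerProductSpace

open InnerProductSpace Set

section AuxLemmas
variable {E : Type*} [NormedAddCommGroup E] [InnerProductSpace ℝ E] [CompleteSpace E]
variable {F : Type*} [NormedAddCommGroup F] [InnerProductSpace ℝ F]

lemma aux_grad_ineq (f : E → ℝ) (hconv : ConvexOn ℝ Set.univ f)
    (hdiff : Differentiable ℝ f) (a b : E) :
    f a + ⟪gradient f a, b - a⟫ ≤ f b := by
  set φ : ℝ → ℝ := fun t => f (a + t • (b - a)) with hφdef
  have hcurve : HasDerivAt (fun t : ℝ => a + t • (b - a)) (b - a) 0 := by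
    simpa using ((hasDerivAt_id (0:ℝ)).smul_const (b - a)).const_add a
  have hgrad : HasFDerivAt f (toDual ℝ E (gradient f a)) (a + (0:ℝ) • (b - a)) := by
    simpa using (hasGradientAt_iff_hasFDerivAt.mp (hdiff a).hasGradientAt)
  have hφ : HasDerivAt φ ⟪gradient f a, b - a⟫ 0 := by
    have := hgrad.comp_hasDerivAt 0 hcurve
    rw [toDual_apply_apply] at this; exact this
  have hslope : ∀ t ∈ Set.Ioo (0:ℝ) 1, slope φ 0 t ≤ f b - f a := by
    intro t ht
    have hconvpt : φ t ≤ (1 - t) * f a + t * f b := by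
      have h := hconv.2 (mem_univ a) (mem_univ b) (by linarith [ht.2] : (0:ℝ) ≤ 1 - t)
        ht.1.le (by ring)
      have heq : (1 - t) • a + t • b = a + t • (b - a) := by
        rw [smul_sub]; module
      simpa [hφdef, heq, smul_eq_mul] using h
    have hφ0 : φ 0 = f a := by simp [hφdef]
    rw [slope_def_field, sub_zero, div_le_iff₀ ht.1]
    nlinarith [ht.1, ht.2]
  have htend : Filter.Tendsto (slope φ 0) (nhdsWithin 0 (Set.Ioi 0)) (nhds ⟪gradient f a, b - a⟫_ℝ) :=
    (hasDerivAt_iff_tendsto_slope.mp hφ).mono_left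
      (nhdsWithin_mono 0 (fun x hx => ne_of_gt hx))
  have hev : ∀ᶠ t in nhdsWithin 0 (Set.Ioi 0), slope φ 0 t ≤ f b - f a := by
    filter_upwards [Ioo_mem_nhdsGT_of_mem (by norm_num : (0:ℝ) ∈ Set.Ico 0 1)] with t ht
    exact hslope t ht
  have := le_of_tendsto htend hev
  linarith

lemma aux_descent (f : E → ℝ) (hdiff : Differentiable ℝ f)
    (Lf : ℝ) (hLf : 0 < Lf)
    (hfL : LipschitzWith (Real.toNNReal Lf) (fun x => gradient f x)) (a b : E) :
    f b ≤ f a + ⟪gradient f a, b - a⟫ + Lf / 2 * ‖b - a‖ ^ 2 := by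
  set d := b - a with hd
  set q : ℝ → ℝ := fun t => Lf / 2 * t ^ 2 * ‖d‖ ^ 2 + t * ⟪gradient f a, d⟫
      - f (a + t • d) with hqdef
  have hlip : ∀ u v : E, ‖gradient f u - gradient f v‖ ≤ Lf * ‖u - v‖ := by
    intro u v
    have := hfL.dist_le_mul u v
    rwa [dist_eq_norm, dist_eq_norm, Real.coe_toNNReal _ hLf.le] at this
  have hq : ∀ t : ℝ, HasDerivAt q
      (Lf * t * ‖d‖ ^ 2 + ⟪gradient f a, d⟫ - ⟪gradient f (a + t • d), d⟫) t := by
    intro t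
    have hcurve : HasDerivAt (fun s : ℝ => a + s • d) d t := by
      simpa using ((hasDerivAt_id t).smul_const d).const_add a
    have hgrad : HasFDerivAt f (toDual ℝ E (gradient f (a + t • d))) (a + t • d) :=
      hasGradientAt_iff_hasFDerivAt.mp (hdiff _).hasGradientAt
    have hcomp : HasDerivAt (fun s : ℝ => f (a + s • d)) ⟪gradient f (a + t • d), d⟫ t := by
      have := hgrad.comp_hasDerivAt t hcurve
      rw [toDual_apply_apply] at this; exact this
    have h1 : HasDerivAt (fun s : ℝ => Lf / 2 * s ^ 2 * ‖d‖ ^ 2 + s * ⟪gradient f a, d⟫)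
        (Lf * t * ‖d‖ ^ 2 + ⟪gradient f a, d⟫) t := by
      have hp : HasDerivAt (fun s : ℝ => Lf / 2 * s ^ 2 * ‖d‖ ^ 2)
          (Lf * t * ‖d‖ ^ 2) t := by
        have := ((hasDerivAt_pow 2 t).const_mul (Lf / 2)).mul_const (‖d‖ ^ 2)
        exact this.congr_deriv (by rw [show (2:ℕ) - 1 = 1 from rfl]; push_cast; ring)
      have hl : HasDerivAt (fun s : ℝ => s * ⟪gradient f a, d⟫) ⟪gradient f a, d⟫ t := by
        simpa using (hasDerivAt_id t).mul_const ⟪gradient f a, d⟫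
      exact hp.add hl
    exact h1.sub hcomp
  have hmono : MonotoneOn q (Set.Icc 0 1) := by
    apply monotoneOn_of_deriv_nonneg (convex_Icc 0 1)
    · exact Continuous.continuousOn (by
        have : Differentiable ℝ q := fun t => (hq t).differentiableAt
        exact this.continuous)
    · exact fun t _ => ((hq t).differentiableAt).differentiableWithinAt
    · intro t ht
      rw [interior_Icc] at ht
      rw [(hq t).deriv]
      have h1 : ⟪gradient f (a + t • d), d⟫ - ⟪gradient f a, d⟫ ≤ Lf * t * ‖d‖ ^ 2 := by
        have h2 : ⟪gradient f (a + t • d) - gradient f a, d⟫ ≤ ‖gradient f (a + t • d) - gradient f a‖ * ‖d‖ :=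
          real_inner_le_norm _ _
        have h3 : ‖gradient f (a + t • d) - gradient f a‖ ≤ Lf * (t * ‖d‖) := by
          have := hlip (a + t • d) a
          simpa [norm_smul, abs_of_pos ht.1, mul_assoc] using this
        have h4 : ⟪gradient f (a + t • d) - gradient f a, d⟫
            = ⟪gradient f (a + t • d), d⟫ - ⟪gradient f a, d⟫ := inner_sub_left _ _ _
        nlinarith [norm_nonneg d, ht.1.le, mul_le_mul_of_nonneg_right h3 (norm_nonneg d)]
      linarith
  have h01 := hmono (Set.mem_Icc.mpr ⟨le_refl 0, by norm_num⟩)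
      (Set.mem_Icc.mpr ⟨by norm_num, le_refl 1⟩) (by norm_num)
  simp only [hqdef] at h01
  simp only [one_pow, one_smul, zero_smul, add_zero, one_mul] at h01
  have : a + d = b := by rw [hd]; abel
  rw [this] at h01
  norm_num at h01
  rw [← inner_gradient_left] at h01
  linarith

lemma aux_half_coco (f : E → ℝ) (hconv : ConvexOn ℝ Set.univ f)
    (hdiff : Differentiable ℝ f) (Lf : ℝ) (hLf : 0 < Lf)
    (hfL : LipschitzWith (Real.toNNReal Lf) (fun x => gradient f x)) (a b : E) :
    f a + ⟪gradient f a, b - a⟫ + 1 / (2 * Lf) * ‖gradient f b - gradient f a‖ ^ 2 ≤ f b := by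
  set Δ := gradient f b - gradient f a with hΔ
  set c := b - (1 / Lf) • Δ with hc
  have h1 := aux_grad_ineq f hconv hdiff a c
  have h2 := aux_descent f hdiff Lf hLf hfL b c
  have e1 : ⟪gradient f a, c - a⟫ = ⟪gradient f a, b - a⟫ - (1 / Lf) * ⟪gradient f a, Δ⟫ := by
    rw [hc]
    rw [show b - (1 / Lf) • Δ - a = (b - a) - (1 / Lf) • Δ by abel]
    rw [inner_sub_right, real_inner_smul_right]
  have e2 : c - b = -((1 / Lf) • Δ) := by rw [hc]; abel
  have e3 : ⟪gradient f b, c - b⟫ = -((1 / Lf) * ⟪gradient f b, Δ⟫) := by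
    rw [e2, inner_neg_right, real_inner_smul_right]
  have e4 : ‖c - b‖ ^ 2 = (1 / Lf) ^ 2 * ‖Δ‖ ^ 2 := by
    rw [e2, norm_neg, norm_smul]
    rw [Real.norm_eq_abs, abs_of_pos (by positivity : (0:ℝ) < 1 / Lf)]
    ring
  have e5 : ⟪gradient f b, Δ⟫ - ⟪gradient f a, Δ⟫ = ‖Δ‖ ^ 2 := by
    rw [← inner_sub_left, ← hΔ, real_inner_self_eq_norm_sq]
  rw [e1] at h1
  rw [e3, e4] at h2
  have hL : Lf / 2 * ((1 / Lf) ^ 2 * ‖Δ‖ ^ 2) = 1 / (2 * Lf) * ‖Δ‖ ^ 2 := by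
    field_simp
  have hL2 : (1 / Lf) * ‖Δ‖ ^ 2 - 1 / (2 * Lf) * ‖Δ‖ ^ 2 = 1 / (2 * Lf) * ‖Δ‖ ^ 2 := by
    field_simp; ring
  have e5' : 1 / Lf * ⟪gradient f b, Δ⟫_ℝ - 1 / Lf * ⟪gradient f a, Δ⟫_ℝ
      = 1 / Lf * ‖Δ‖ ^ 2 := by linear_combination (1 / Lf) * e5
  linarith [h1, h2, hL, hL2, e5']

lemma aux_coco (f : E → ℝ) (hconv : ConvexOn ℝ Set.univ f)
    (hdiff : Differentiable ℝ f) (Lf : ℝ) (hLf : 0 < Lf)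
    (hfL : LipschitzWith (Real.toNNReal Lf) (fun x => gradient f x)) (a b : E) :
    (1 / Lf) * ‖gradient f b - gradient f a‖ ^ 2 ≤ ⟪gradient f b - gradient f a, b - a⟫ := by
  have h1 := aux_half_coco f hconv hdiff Lf hLf hfL a b
  have h2 := aux_half_coco f hconv hdiff Lf hLf hfL b a
  have e1 : ‖gradient f a - gradient f b‖ = ‖gradient f b - gradient f a‖ := norm_sub_rev _ _
  rw [e1] at h2
  have e2 : ⟪gradient f b, a - b⟫ = -⟪gradient f b, b - a⟫ := by
    rw [show a - b = -(b - a) by abel, inner_neg_right]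
  rw [e2] at h2
  have e3 : ⟪gradient f b - gradient f a, b - a⟫
      = ⟪gradient f b, b - a⟫ - ⟪gradient f a, b - a⟫ := inner_sub_left _ _ _
  have e4 : 1 / (2 * Lf) * ‖gradient f b - gradient f a‖ ^ 2
      + 1 / (2 * Lf) * ‖gradient f b - gradient f a‖ ^ 2
      = (1 / Lf) * ‖gradient f b - gradient f a‖ ^ 2 := by field_simp; ring
  linarith

lemma aux_prox_subgrad (g : F → ℝ) (hg_conv : ConvexOn ℝ Set.univ g)
    (μ : ℝ) (hμ : 0 < μ) (prox : F → F)
    (hprox : ∀ v, IsMinOn (fun z => g z + ‖z - v‖ ^ 2 / (2 * μ)) Set.univ (prox v))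
    (v z : F) :
    ⟪v - prox v, z - prox v⟫ ≤ μ * (g z - g (prox v)) := by
  set p := prox v with hp
  set B := ‖z - p‖ ^ 2 with hB
  set c := ⟪p - v, z - p⟫_ℝ with hc
  have key : ∀ t : ℝ, 0 < t → t ≤ 1 → ⟪v - p, z - p⟫_ℝ ≤ μ * (g z - g p) + t * (B / 2) := by
    intro t ht0 ht1
    have hmin := isMinOn_iff.mp (hprox v) (p + t • (z - p)) (mem_univ _)
    have hconvpt : g (p + t • (z - p)) ≤ (1 - t) * g p + t * g z := by
      have h := hg_conv.2 (mem_univ p) (mem_univ z) (by linarith : (0:ℝ) ≤ 1 - t) ht0.le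
        (by ring)
      have heq : (1 - t) • p + t • z = p + t • (z - p) := by rw [smul_sub]; module
      simpa [heq, smul_eq_mul] using h
    have hnorm : ‖p + t • (z - p) - v‖ ^ 2 = ‖p - v‖ ^ 2 + 2 * (t * c) + t ^ 2 * B := by
      rw [show p + t • (z - p) - v = (p - v) + t • (z - p) by abel]
      rw [norm_add_sq_real, real_inner_smul_right, norm_smul, Real.norm_eq_abs,
        mul_pow, sq_abs]
    rw [hnorm] at hmin
    -- hmin : g p + ‖p-v‖^2/(2μ) ≤ g(p+t•(z-p)) + (‖p-v‖^2 + 2tc + t²B)/(2μ)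
    have h0 : 0 ≤ t * (g z - g p) + (2 * (t * c) + t ^ 2 * B) / (2 * μ) := by
      have hsplit : (‖p - v‖ ^ 2 + 2 * (t * c) + t ^ 2 * B) / (2 * μ)
          = ‖p - v‖ ^ 2 / (2 * μ) + (2 * (t * c) + t ^ 2 * B) / (2 * μ) := by ring
      rw [hsplit] at hmin
      linarith
    have h1 : 0 ≤ t * (g z - g p) * (2 * μ) + (2 * (t * c) + t ^ 2 * B) := by
      have := mul_le_mul_of_nonneg_left h0 (by positivity : (0:ℝ) ≤ 2 * μ)
      rw [mul_zero] at this
      calc (0:ℝ) ≤ 2 * μ * (t * (g z - g p) + (2 * (t * c) + t ^ 2 * B) / (2 * μ)) := this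
        _ = t * (g z - g p) * (2 * μ) + (2 * (t * c) + t ^ 2 * B) := by field_simp
    have h2 : 0 ≤ t * ((g z - g p) * (2 * μ) + 2 * c + t * B) := by nlinarith [h1]
    have h3 : 0 ≤ (g z - g p) * (2 * μ) + 2 * c + t * B :=
      nonneg_of_mul_nonneg_right (by linarith [h2]) ht0
    have hcc : ⟪v - p, z - p⟫_ℝ = -c := by
      rw [hc, show p - v = -(v - p) by abel, inner_neg_left, neg_neg]
    rw [hcc]
    linarith
  apply le_of_forall_pos_le_add
  intro ε hε
  set t := min 1 (ε / (B / 2 + 1)) with ht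
  have hB0 : (0:ℝ) ≤ B := by positivity
  have ht0 : 0 < t := lt_min one_pos (by positivity)
  have ht1 : t ≤ 1 := min_le_left _ _
  have hkey := key t ht0 ht1
  have htb : t * (B / 2) ≤ ε := by
    have h1 : t ≤ ε / (B / 2 + 1) := min_le_right _ _
    have h2 : t * (B / 2) ≤ (ε / (B / 2 + 1)) * (B / 2) :=
      mul_le_mul_of_nonneg_right h1 (by positivity)
    have h3 : (ε / (B / 2 + 1)) * (B / 2) ≤ ε := by
      rw [div_mul_eq_mul_div, div_le_iff₀ (by positivity : (0:ℝ) < B / 2 + 1)]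
      nlinarith
    linarith
  linarith

lemma aux_firm (g : F → ℝ) (hg_conv : ConvexOn ℝ Set.univ g)
    (μ : ℝ) (hμ : 0 < μ) (prox : F → F)
    (hprox : ∀ v, IsMinOn (fun z => g z + ‖z - v‖ ^ 2 / (2 * μ)) Set.univ (prox v))
    (v w : F) :
    0 ≤ ⟪prox v - prox w, (v - prox v) - (w - prox w)⟫ := by
  set p := prox v
  set q := prox w
  have h1 := aux_prox_subgrad g hg_conv μ hμ prox hprox v q
  have h2 := aux_prox_subgrad g hg_conv μ hμ prox hprox w p
  have e : ⟪p - q, (v - p) - (w - q)⟫_ℝ = -⟪v - p, q - p⟫_ℝ - ⟪w - q, p - q⟫_ℝ := by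
    rw [inner_sub_right]
    rw [real_inner_comm (v - p) (p - q), real_inner_comm (w - q) (p - q)]
    rw [show q - p = -(p - q) by abel, inner_neg_right]
    ring
  rw [e]
  linarith

end AuxLemmas

/-- Along solutions of the primal-descent dual-ascent gradient flow
`ẋ = -(∇f x + Tᵀ ∇M_{μg}(Tx + μy))`, `ẏ = μ(∇M_{μg}(Tx + μy) - y)`, with
`∇M_{μg}(v) = (1/μ)(v - prox v)`, the Lyapunov function
`V = ½‖x - x*‖² + ½‖y - y*‖²` satisfies
`V̇ ≤ -(1/L_f)‖∇f x - ∇f x*‖² - (1/μ)‖T(x - x*) - z̃‖²` where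
`z̃ = prox(Tx + μy) - prox(Tx* + μy*)`; in particular `V̇ ≤ 0`. -/
theorem gradient_flow_lyapunov_decrease
    {n m : ℕ} (f : EuclideanSpace ℝ (Fin n) → ℝ)
    (hf_conv : ConvexOn ℝ Set.univ f) (hf : ContDiff ℝ 1 f)
    (Lf : ℝ) (hLf : 0 < Lf)
    (hfL : LipschitzWith (Real.toNNReal Lf) (fun x => gradient f x))
    (g : EuclideanSpace ℝ (Fin m) → ℝ)
    (hg_conv : ConvexOn ℝ Set.univ g) (hg_lsc : LowerSemicontinuous g)
    (T : EuclideanSpace ℝ (Fin n) →L[ℝ] EuclideanSpace ℝ (Fin m))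
    (μ : ℝ) (hμ : 0 < μ)
    (prox : EuclideanSpace ℝ (Fin m) → EuclideanSpace ℝ (Fin m))
    (hprox : ∀ v, IsMinOn (fun z => g z + ‖z - v‖ ^ 2 / (2 * μ)) Set.univ (prox v))
    (xs : EuclideanSpace ℝ (Fin n)) (ys : EuclideanSpace ℝ (Fin m))
    -- optimality of the primal-dual pair (x*, y*):
    (hopt1 : gradient f xs + ContinuousLinearMap.adjoint T ys = 0)
    (hopt2 : T xs = prox (T xs + μ • ys))
    -- a solution (x(t), y(t)) of the gradient flow dynamics:
    (x : ℝ → EuclideanSpace ℝ (Fin n)) (y : ℝ → EuclideanSpace ℝ (Fin m))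
    (hx : ∀ t, HasDerivAt x
      (-(gradient f (x t) + ContinuousLinearMap.adjoint T
        ((1 / μ) • (T (x t) + μ • y t - prox (T (x t) + μ • y t))))) t)
    (hy : ∀ t, HasDerivAt y
      (μ • ((1 / μ) • (T (x t) + μ • y t - prox (T (x t) + μ • y t)) - y t)) t)
    (V : ℝ → ℝ)
    (hV : ∀ t, V t = 1 / 2 * ‖x t - xs‖ ^ 2 + 1 / 2 * ‖y t - ys‖ ^ 2) :
    ∀ t, deriv V t ≤
      -(1 / Lf) * ‖gradient f (x t) - gradient f xs‖ ^ 2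
      - (1 / μ) * ‖T (x t - xs) - (prox (T (x t) + μ • y t) - prox (T xs + μ • ys))‖ ^ 2
      ∧ deriv V t ≤ 0 := by
  have hdiff : Differentiable ℝ f := hf.differentiable one_ne_zero
  intro t
  -- notation
  set u := x t with hu
  set w := y t with hw
  set p := prox (T u + μ • w) with hpdef
  set ps := prox (T xs + μ • ys) with hpsdef
  have hps : ps = T xs := hopt2.symm
  set xdot := -(gradient f u + ContinuousLinearMap.adjoint T
      ((1 / μ) • (T u + μ • w - p))) with hxd
  set ydot := μ • ((1 / μ) • (T u + μ • w - p) - w) with hyd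
  -- derivative of V
  have hVfun : V = fun s => 1 / 2 * ⟪x s - xs, x s - xs⟫_ℝ + 1 / 2 * ⟪y s - ys, y s - ys⟫_ℝ := by
    funext s
    rw [hV s, real_inner_self_eq_norm_sq, real_inner_self_eq_norm_sq]
  have hdX : HasDerivAt (fun s => x s - xs) xdot t := (hx t).sub_const xs
  have hdY : HasDerivAt (fun s => y s - ys) ydot t := (hy t).sub_const ys
  have hdV : HasDerivAt V (⟪u - xs, xdot⟫_ℝ + ⟪w - ys, ydot⟫_ℝ) t := by
    rw [hVfun]
    have h1 := (hdX.inner ℝ hdX).const_mul (1/2 : ℝ)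
    have h2 := (hdY.inner ℝ hdY).const_mul (1/2 : ℝ)
    have := h1.add h2
    refine this.congr_deriv ?_
    rw [real_inner_comm xdot (u - xs), real_inner_comm ydot (w - ys)]
    ring
  have hderiv : deriv V t = ⟪u - xs, xdot⟫_ℝ + ⟪w - ys, ydot⟫_ℝ := hdV.deriv
  -- scalar quantities
  set a := u - xs with ha
  set b := w - ys with hb
  set z := p - ps with hz
  set Δ := gradient f u - gradient f xs with hΔ
  set c1 := ⟪a, Δ⟫_ℝ with hc1
  set c2 := ⟪T a, z⟫_ℝ with hc2
  set c3 := ⟪b, z⟫_ℝ with hc3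
  set c4 := ⟪T a, b⟫_ℝ with hc4
  set c5 := ⟪T a, ys⟫_ℝ with hc5
  -- decomposition of T u + μ w - p
  have hX : T u + μ • w - p = T a + μ • b - z + μ • ys := by
    rw [ha, hb, hz, hps, map_sub, smul_sub]
    abel
  -- value of ⟪a, xdot⟫
  have hgradxs : gradient f xs = -(ContinuousLinearMap.adjoint T ys) :=
    eq_neg_of_add_eq_zero_left hopt1
  have hagrad : ⟪a, gradient f u⟫_ℝ = c1 - c5 := by
    have : gradient f u = Δ + gradient f xs := by rw [hΔ]; abel
    rw [this, inner_add_right, hgradxs, inner_neg_right,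
      ContinuousLinearMap.adjoint_inner_right]
    rw [hc1, hc5]
    try ring
  have haX : ⟪T a, T u + μ • w - p⟫_ℝ = ‖T a‖ ^ 2 + μ * c4 - c2 + μ * c5 := by
    rw [hX, inner_add_right, inner_sub_right, inner_add_right,
      real_inner_smul_right, real_inner_smul_right, real_inner_self_eq_norm_sq]
    try rw [hc4, hc2, hc5]
    try ring
  have haxdot : ⟪a, xdot⟫_ℝ = -(c1 - c5) - (1/μ) * (‖T a‖ ^ 2 + μ * c4 - c2 + μ * c5) := by
    rw [hxd, inner_neg_right, inner_add_right,
      ContinuousLinearMap.adjoint_inner_right, real_inner_smul_right, hagrad, haX]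
    ring
  -- value of ⟪b, ydot⟫
  have hydot : ydot = T a - z := by
    rw [hyd, smul_sub, smul_smul, mul_one_div_cancel hμ.ne', one_smul]
    rw [ha, hz, hps, map_sub]
    abel
  have hbydot : ⟪b, ydot⟫_ℝ = c4 - c3 := by
    rw [hydot, inner_sub_right, real_inner_comm (T a) b, hc4, hc3]
  -- cocoercivity
  have hcoco : (1 / Lf) * ‖Δ‖ ^ 2 ≤ c1 := by
    have h := aux_coco f hf_conv hdiff Lf hLf hfL xs u
    rw [hc1, ha, hΔ, real_inner_comm]
    exact h
  -- firm nonexpansiveness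
  have hfirmraw := aux_firm g hg_conv μ hμ prox hprox (T u + μ • w) (T xs + μ • ys)
  have hfirm : 0 ≤ c2 + μ * c3 - ‖z‖ ^ 2 := by
    have e1 : (T u + μ • w - p) - (T xs + μ • ys - ps) = T a + μ • b - z := by
      rw [ha, hb, hz, map_sub, smul_sub]; abel
    have e2 : ⟪z, T a + μ • b - z⟫_ℝ = c2 + μ * c3 - ‖z‖ ^ 2 := by
      rw [inner_sub_right, inner_add_right, real_inner_smul_right,
        real_inner_self_eq_norm_sq, real_inner_comm (T a) z, real_inner_comm b z,
        hc2, hc3]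
    have := hfirmraw
    rw [← hpdef, ← hpsdef, ← hz, e1, e2] at this
    exact this
  -- goal norms
  have hTgoal : ‖T (x t - xs) - (p - ps)‖ ^ 2 = ‖T a‖ ^ 2 - 2 * c2 + ‖z‖ ^ 2 := by
    rw [← ha, ← hz, norm_sub_sq_real, hc2]
  -- final inequality
  have hfirm' : 0 ≤ (1/μ) * c2 + c3 - (1/μ) * ‖z‖ ^ 2 := by
    have h := mul_nonneg (by positivity : (0:ℝ) ≤ 1/μ) hfirm
    have e : (1/μ) * (c2 + μ * c3 - ‖z‖ ^ 2) = (1/μ) * c2 + c3 - (1/μ) * ‖z‖ ^ 2 := by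
      field_simp
      try ring
    linarith [e ▸ h]
  have main : deriv V t ≤
      -(1 / Lf) * ‖Δ‖ ^ 2 - (1 / μ) * ‖T (x t - xs) - (p - ps)‖ ^ 2 := by
    rw [hderiv, haxdot, hbydot, hTgoal]
    have expand : -(c1 - c5) - (1/μ) * (‖T a‖ ^ 2 + μ * c4 - c2 + μ * c5) + (c4 - c3)
        = -c1 - (1/μ) * ‖T a‖ ^ 2 + (1/μ) * c2 - c3 := by
      field_simp
      ring
    rw [expand]
    have expand2 : -(1 / Lf) * ‖Δ‖ ^ 2 - (1/μ) * (‖T a‖ ^ 2 - 2 * c2 + ‖z‖ ^ 2)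
        = -((1/Lf) * ‖Δ‖^2) - (1/μ) * ‖T a‖ ^ 2 + 2 * ((1/μ) * c2) - (1/μ) * ‖z‖ ^ 2 := by
      ring
    rw [expand2]
    linarith [hcoco, hfirm']
  constructor
  · exact main
  · have h1 : -(1 / Lf) * ‖Δ‖ ^ 2 - (1 / μ) * ‖T (x t - xs) - (p - ps)‖ ^ 2 ≤ 0 := by
      have : (0:ℝ) ≤ (1/Lf) * ‖Δ‖^2 := by positivity
      have : (0:ℝ) ≤ (1/μ) * ‖T (x t - xs) - (p - ps)‖^2 := by positivity
      linarith [(by positivity : (0:ℝ) ≤ (1/Lf) * ‖Δ‖^2)]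
    linarith [main, h1]
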